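/- Let k ∈ ℝ, let u ∈ ℝ³ with ‖u‖ = 1, let r > 0, and let y ∈ ℝ³ with ‖y‖ ≥ 2r. Then | e^{i k ‖y − r·u‖}/(4π‖y − r·u‖) − e^{i k ‖y‖}·e^{−i k r ⟨u, y⟩/‖y‖}/(4π‖y‖) | ≤ (4|k|r² + 2r) / (4π‖y‖²). -/

import Mathlib

open scoped RealInnerProductSpace

lemma norm_exp_I_mul_sub_one_le (θ : ℝ) :
    ‖Complex.exp ((θ : ℂ) * Complex.I) - 1‖ ≤ |θ| := by
  have h2 : ‖Complex.exp ((θ : ℂ) * Complex.I) - 1‖ ^ 2 = 2 - 2 * Real.cos θ := by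
    rw [Complex.sq_norm, Complex.normSq_apply]
    simp [Complex.exp_ofReal_mul_I_re, Complex.exp_ofReal_mul_I_im]
    nlinarith [Real.sin_sq_add_cos_sq θ]
  have hcos := Real.one_sub_sq_div_two_le_cos (x := θ)
  nlinarith [norm_nonneg (Complex.exp ((θ : ℂ) * Complex.I) - 1), abs_nonneg θ, sq_abs θ]

lemma farfield_aux (k a b d r : ℝ) (hr : 0 < r) (hb : 0 < b)
    (ha : b / 2 ≤ a) (habs : |b - a| ≤ r)
    (had0 : 0 ≤ a - d) (had : a - d ≤ r ^ 2 / b) :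
    ‖Complex.exp (Complex.I * (k : ℂ) * (a : ℂ)) / (4 * (Real.pi : ℂ) * (a : ℂ))
        - Complex.exp (Complex.I * (k : ℂ) * (d : ℂ)) / (4 * (Real.pi : ℂ) * (b : ℂ))‖
      ≤ (4 * |k| * r ^ 2 + 2 * r) / (4 * Real.pi * b ^ 2) := by
  have hπ : 0 < Real.pi := Real.pi_pos
  have ha0 : 0 < a := by linarith
  have haC : ((a : ℝ) : ℂ) ≠ 0 := by exact_mod_cast ha0.ne'
  have hbC : ((b : ℝ) : ℂ) ≠ 0 := by exact_mod_cast hb.ne'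
  have hπC : ((Real.pi : ℝ) : ℂ) ≠ 0 := by exact_mod_cast hπ.ne'
  have hmain : Complex.exp (Complex.I * (k : ℂ) * (a : ℂ)) / (4 * (Real.pi : ℂ) * (a : ℂ))
        - Complex.exp (Complex.I * (k : ℂ) * (d : ℂ)) / (4 * (Real.pi : ℂ) * (b : ℂ))
      = Complex.exp (Complex.I * (k : ℂ) * (a : ℂ))
          * ((1 / (4 * (Real.pi : ℂ) * (a : ℂ))) - (1 / (4 * (Real.pi : ℂ) * (b : ℂ))))
        + (Complex.exp (Complex.I * (k : ℂ) * (a : ℂ))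
            - Complex.exp (Complex.I * (k : ℂ) * (d : ℂ)))
          * (1 / (4 * (Real.pi : ℂ) * (b : ℂ))) := by
    ring
  rw [hmain]
  have hnexp : ∀ t : ℝ, ‖Complex.exp (Complex.I * (k : ℂ) * (t : ℂ))‖ = 1 := by
    intro t
    have h : Complex.I * (k : ℂ) * (t : ℂ) = ((k * t : ℝ) : ℂ) * Complex.I := by
      push_cast; ring
    rw [h, Complex.norm_exp_ofReal_mul_I]
  have hT1 : ‖(1 / (4 * (Real.pi : ℂ) * (a : ℂ))) - (1 / (4 * (Real.pi : ℂ) * (b : ℂ)))‖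
      ≤ 2 * r / (4 * Real.pi * b ^ 2) := by
    have hcast : (1 / (4 * (Real.pi : ℂ) * (a : ℂ))) - (1 / (4 * (Real.pi : ℂ) * (b : ℂ)))
        = (((1 / (4 * Real.pi * a) - 1 / (4 * Real.pi * b)) : ℝ) : ℂ) := by
      push_cast; ring
    rw [hcast, Complex.norm_real, Real.norm_eq_abs]
    have heq : 1 / (4 * Real.pi * a) - 1 / (4 * Real.pi * b)
        = (b - a) / (4 * Real.pi * a * b) := by
      field_simp
    rw [heq, abs_div, abs_of_pos (by positivity : (0:ℝ) < 4 * Real.pi * a * b)]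
    rw [div_le_div_iff₀ (by positivity) (by positivity)]
    have h2ab : 0 ≤ 2 * a - b := by linarith
    have hkey : 0 ≤ Real.pi * r * (b * (2 * a - b)) :=
      mul_nonneg (mul_nonneg hπ.le hr.le) (mul_nonneg hb.le h2ab)
    calc |b - a| * (4 * Real.pi * b ^ 2)
        ≤ r * (4 * Real.pi * b ^ 2) :=
          mul_le_mul_of_nonneg_right habs (by positivity)
      _ ≤ 2 * r * (4 * Real.pi * a * b) := by nlinarith [hkey]
  have hT2 : ‖Complex.exp (Complex.I * (k : ℂ) * (a : ℂ))
        - Complex.exp (Complex.I * (k : ℂ) * (d : ℂ))‖ ≤ |k| * (r ^ 2 / b) := by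
    have hfac : Complex.exp (Complex.I * (k : ℂ) * (a : ℂ))
          - Complex.exp (Complex.I * (k : ℂ) * (d : ℂ))
        = Complex.exp (Complex.I * (k : ℂ) * (d : ℂ))
            * (Complex.exp (((k * (a - d) : ℝ) : ℂ) * Complex.I) - 1) := by
      rw [mul_sub, mul_one, ← Complex.exp_add]
      congr 2
      push_cast; ring
    rw [hfac, norm_mul, hnexp, one_mul]
    calc ‖Complex.exp (((k * (a - d) : ℝ) : ℂ) * Complex.I) - 1‖
        ≤ |k * (a - d)| := norm_exp_I_mul_sub_one_le _
      _ = |k| * (a - d) := by rw [abs_mul, abs_of_nonneg had0]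
      _ ≤ |k| * (r ^ 2 / b) := mul_le_mul_of_nonneg_left had (abs_nonneg k)
  have hn3 : ‖(1 / (4 * (Real.pi : ℂ) * (b : ℂ)))‖ = 1 / (4 * Real.pi * b) := by
    have h : (1 / (4 * (Real.pi : ℂ) * (b : ℂ))) = (((1 / (4 * Real.pi * b)) : ℝ) : ℂ) := by
      push_cast; ring
    rw [h, Complex.norm_real, Real.norm_eq_abs, abs_of_pos (by positivity)]
  calc ‖Complex.exp (Complex.I * (k : ℂ) * (a : ℂ))
          * ((1 / (4 * (Real.pi : ℂ) * (a : ℂ))) - (1 / (4 * (Real.pi : ℂ) * (b : ℂ))))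
        + (Complex.exp (Complex.I * (k : ℂ) * (a : ℂ))
            - Complex.exp (Complex.I * (k : ℂ) * (d : ℂ)))
          * (1 / (4 * (Real.pi : ℂ) * (b : ℂ)))‖
      ≤ ‖Complex.exp (Complex.I * (k : ℂ) * (a : ℂ))‖
          * ‖(1 / (4 * (Real.pi : ℂ) * (a : ℂ))) - (1 / (4 * (Real.pi : ℂ) * (b : ℂ)))‖
        + ‖Complex.exp (Complex.I * (k : ℂ) * (a : ℂ))
            - Complex.exp (Complex.I * (k : ℂ) * (d : ℂ))‖
          * ‖(1 / (4 * (Real.pi : ℂ) * (b : ℂ)))‖ := by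
        refine (norm_add_le _ _).trans ?_
        rw [norm_mul, norm_mul]
    _ ≤ 1 * (2 * r / (4 * Real.pi * b ^ 2))
        + (|k| * (r ^ 2 / b)) * (1 / (4 * Real.pi * b)) := by
        rw [hnexp, hn3]
        gcongr
    _ = (|k| * r ^ 2 + 2 * r) / (4 * Real.pi * b ^ 2) := by
        field_simp; ring
    _ ≤ (4 * |k| * r ^ 2 + 2 * r) / (4 * Real.pi * b ^ 2) := by
        gcongr
        nlinarith [abs_nonneg k]

/-- Quantitative far-field approximation of the free Helmholtz
Green function: for a unit vector `u`, `r > 0` and `‖y‖ ≥ 2r`,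
`| e^{ik‖y−ru‖}/(4π‖y−ru‖) − e^{ik‖y‖} e^{−ikr⟨u,y⟩/‖y‖}/(4π‖y‖) |
  ≤ (4|k|r² + 2r)/(4π‖y‖²)`. -/
theorem farfield_green_function_approximation
    (k : ℝ) (u y : EuclideanSpace ℝ (Fin 3)) (hu : ‖u‖ = 1)
    (r : ℝ) (hr : 0 < r) (hy : 2 * r ≤ ‖y‖) :
    ‖Complex.exp (Complex.I * (k : ℂ) * (‖y - r • u‖ : ℂ))
          / (4 * (Real.pi : ℂ) * (‖y - r • u‖ : ℂ))
        - Complex.exp (Complex.I * (k : ℂ) * (‖y‖ : ℂ))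
            * Complex.exp (-(Complex.I * (k : ℂ) * (r : ℂ) * ((⟪u, y⟫ : ℝ) / ‖y‖ : ℝ)))
            / (4 * (Real.pi : ℂ) * (‖y‖ : ℂ))‖
      ≤ (4 * |k| * r ^ 2 + 2 * r) / (4 * Real.pi * ‖y‖ ^ 2) := by
  have hb : 0 < ‖y‖ := lt_of_lt_of_le (by linarith) hy
  have hexp : Complex.exp (Complex.I * (k : ℂ) * (‖y‖ : ℂ))
      * Complex.exp (-(Complex.I * (k : ℂ) * (r : ℂ) * ((⟪u, y⟫ : ℝ) / ‖y‖ : ℝ)))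
      = Complex.exp (Complex.I * (k : ℂ) * ((‖y‖ - r * (⟪u, y⟫ / ‖y‖) : ℝ) : ℂ)) := by
    rw [← Complex.exp_add]; congr 1; push_cast; ring
  rw [hexp]
  have hru : ‖r • u‖ = r := by rw [norm_smul, hu]; simp [abs_of_pos hr]
  have hinner : |⟪u, y⟫| ≤ ‖y‖ := by simpa [hu] using abs_real_inner_le_norm u y
  have hba : ‖y‖ - r ≤ ‖y - r • u‖ := by
    have := norm_sub_norm_le y (r • u); rw [hru] at this; exact this
  have ha2 : ‖y‖ / 2 ≤ ‖y - r • u‖ := by linarith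
  have ha0 : 0 < ‖y - r • u‖ := by linarith
  have hasq : ‖y - r • u‖ ^ 2 = ‖y‖ ^ 2 - 2 * r * ⟪u, y⟫ + r ^ 2 := by
    rw [@norm_sub_sq_real, real_inner_smul_right, real_inner_comm, hru]
    ring
  have habs : |‖y‖ - ‖y - r • u‖| ≤ r := by
    have h := abs_norm_sub_norm_le y (y - r • u)
    simpa [hru] using h
  have hc1 : |⟪u, y⟫ / ‖y‖| ≤ 1 := by
    rw [abs_div, abs_of_pos hb]
    exact div_le_one_of_le₀ hinner hb.le
  have hc2 : (⟪u, y⟫ / ‖y‖) ^ 2 ≤ 1 := by nlinarith [abs_le.mp hc1]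
  have hbc : ‖y‖ * (⟪u, y⟫ / ‖y‖) = ⟪u, y⟫ := by
    rw [mul_comm, div_mul_cancel₀ _ hb.ne']
  have hsqdiff : ‖y - r • u‖ ^ 2 - (‖y‖ - r * (⟪u, y⟫ / ‖y‖)) ^ 2
      = r ^ 2 * (1 - (⟪u, y⟫ / ‖y‖) ^ 2) := by
    rw [hasq]
    linear_combination (2 * r) * hbc
  have hd2 : ‖y‖ / 2 ≤ ‖y‖ - r * (⟪u, y⟫ / ‖y‖) := by
    have : r * (⟪u, y⟫ / ‖y‖) ≤ r := by nlinarith [abs_le.mp hc1]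
    linarith
  have hd0 : 0 < ‖y‖ - r * (⟪u, y⟫ / ‖y‖) := by linarith
  have hpos : 0 ≤ ‖y - r • u‖ ^ 2 - (‖y‖ - r * (⟪u, y⟫ / ‖y‖)) ^ 2 := by
    rw [hsqdiff]
    nlinarith [mul_le_mul_of_nonneg_left hc2 (sq_nonneg r)]
  have had0 : 0 ≤ ‖y - r • u‖ - (‖y‖ - r * (⟪u, y⟫ / ‖y‖)) := by
    nlinarith [hpos, ha0, hd0]
  have had : ‖y - r • u‖ - (‖y‖ - r * (⟪u, y⟫ / ‖y‖)) ≤ r ^ 2 / ‖y‖ := by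
    rw [le_div_iff₀ hb]
    have h1 : (‖y - r • u‖ - (‖y‖ - r * (⟪u, y⟫ / ‖y‖))) * ‖y‖
        ≤ (‖y - r • u‖ - (‖y‖ - r * (⟪u, y⟫ / ‖y‖)))
            * (‖y - r • u‖ + (‖y‖ - r * (⟪u, y⟫ / ‖y‖))) :=
      mul_le_mul_of_nonneg_left (by linarith) had0
    nlinarith [h1, hsqdiff, sq_nonneg (r * (⟪u, y⟫ / ‖y‖))]
  exact farfield_aux k _ _ _ r hr hb ha2 habs had0 had
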